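/- arXiv:2405.08291 — 7 statements merged into one kernel-verified Lean document; each statement's English description precedes it below -/
import Mathlib

section
/- Let H₄⁽⁻⁾ be the Lie algebra over a field k of characteristic ≠ 2 with basis 1, g, e, f and brackets [1,·] = 0, [g,e] = 2e, [g,f] = −2f, [e,f] = 0. If L is a two-dimensional ideal of H₄⁽⁻⁾ different from K = k·e + k·f, then L equals k·1 + k·e or k·1 + k·f. -/
/-- Any two-dimensional ideal of `H₄⁽⁻⁾` different from `K = span{e, f}` equals
`span{1, e}` or `span{1, f}`. -/
theorem two_dim_ideals {k : Type*} [Field k] (h2 : (2 : k) ≠ 0)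
    {L : Type*} [LieRing L] [LieAlgebra k L] (b : Module.Basis (Fin 4) k L)
    (h1g : ⁅b 0, b 1⁆ = 0) (h1e : ⁅b 0, b 2⁆ = 0) (h1f : ⁅b 0, b 3⁆ = 0)
    (hge : ⁅b 1, b 2⁆ = (2 : k) • b 2) (hgf : ⁅b 1, b 3⁆ = -((2 : k) • b 3))
    (hef : ⁅b 2, b 3⁆ = 0)
    (N : Submodule k L) (hideal : ∀ x : L, ∀ y ∈ N, ⁅x, y⁆ ∈ N)
    (hdim : Module.finrank k N = 2)
    (hK : N ≠ Submodule.span k ({b 2, b 3} : Set L)) :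
    N = Submodule.span k ({b 0, b 2} : Set L) ∨
      N = Submodule.span k ({b 0, b 3} : Set L) := by
  haveI : Module.Finite k L := Module.Finite.of_basis b
  -- brackets in the opposite order
  have e0 : ⁅b 2, b 0⁆ = 0 := by rw [← lie_skew, h1e, neg_zero]
  have e1 : ⁅b 2, b 1⁆ = -((2 : k) • b 2) := by rw [← lie_skew, hge]
  have f0 : ⁅b 3, b 0⁆ = 0 := by rw [← lie_skew, h1f, neg_zero]
  have f1 : ⁅b 3, b 1⁆ = (2 : k) • b 3 := by rw [← lie_skew, hgf, neg_neg]
  have f2 : ⁅b 3, b 2⁆ = 0 := by rw [← lie_skew, hef, neg_zero]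
  have g0 : ⁅b 1, b 0⁆ = 0 := by rw [← lie_skew, h1g, neg_zero]
  -- span of two distinct basis vectors has dimension 2
  have hspan : ∀ i j : Fin 4, i ≠ j →
      Module.finrank k (Submodule.span k ({b i, b j} : Set L)) = 2 := by
    intro i j hij
    have hinj : Function.Injective ![i, j] := by
      intro x y hxy
      fin_cases x <;> fin_cases y <;> simp_all
    have hli := b.linearIndependent.comp ![i, j] hinj
    have hrange : Set.range (⇑b ∘ ![i, j]) = {b i, b j} := by
      ext z
      simp only [Set.mem_range, Set.mem_insert_iff, Set.mem_singleton_iff]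
      constructor
      · rintro ⟨x, rfl⟩
        fin_cases x <;> simp
      · rintro (rfl | rfl)
        · exact ⟨0, rfl⟩
        · exact ⟨1, rfl⟩
    rw [← hrange, finrank_span_eq_card hli]
    simp
  -- if both b 2 and b 3 lie in N, then N = span {b 2, b 3}, contradiction
  have hcontra : b 2 ∈ N → b 3 ∈ N → False := by
    intro m2 m3
    apply hK
    refine (Submodule.eq_of_le_of_finrank_le ?_ ?_).symm
    · rw [Submodule.span_le]
      rintro z (rfl | rfl) <;> assumption
    · rw [hdim, hspan 2 3 (by decide)]
  have h8 : (8 : k) ≠ 0 := by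
    have : (8 : k) = 2 * 2 * 2 := by norm_num
    rw [this]
    exact mul_ne_zero (mul_ne_zero h2 h2) h2
  -- key per-element facts
  have key : ∀ y ∈ N, b.repr y 1 = 0 ∧ (b.repr y 2) • b 2 ∈ N ∧ (b.repr y 3) • b 3 ∈ N := by
    intro y hy
    have hy4 : y = b.repr y 0 • b 0 + b.repr y 1 • b 1 + b.repr y 2 • b 2 + b.repr y 3 • b 3 := by
      have := b.sum_repr y
      rw [Fin.sum_univ_four] at this
      exact this.symm
    set r0 := b.repr y 0
    set r1 := b.repr y 1
    set r2 := b.repr y 2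
    set r3 := b.repr y 3
    have hr1 : r1 = 0 := by
      by_contra hr1
      have hbr2 : ⁅b 2, y⁆ = (-(2 * r1)) • b 2 := by
        rw [hy4]
        simp only [lie_add, lie_smul, e0, e1, lie_self, hef, smul_zero, smul_neg, smul_smul]
        module
      have hbr3 : ⁅b 3, y⁆ = (2 * r1) • b 3 := by
        rw [hy4]
        simp only [lie_add, lie_smul, f0, f1, f2, lie_self, smul_zero, smul_smul]
        module
      have m2 : b 2 ∈ N := by
        have hm := hideal (b 2) y hy
        rw [hbr2] at hm
        have := N.smul_mem (-(2 * r1))⁻¹ hm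
        rwa [smul_smul, inv_mul_cancel₀ (by exact neg_ne_zero.mpr (mul_ne_zero h2 hr1)),
          one_smul] at this
      have m3 : b 3 ∈ N := by
        have hm := hideal (b 3) y hy
        rw [hbr3] at hm
        have := N.smul_mem (2 * r1)⁻¹ hm
        rwa [smul_smul, inv_mul_cancel₀ (mul_ne_zero h2 hr1), one_smul] at this
      exact hcontra m2 m3
    -- bracket with g
    have hu : ⁅b 1, y⁆ = (2 * r2) • b 2 + (-(2 * r3)) • b 3 := by
      rw [hy4]
      simp only [lie_add, lie_smul, lie_self, g0, hge, hgf, smul_zero, smul_smul, smul_neg]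
      module
    have huN : ⁅b 1, y⁆ ∈ N := hideal (b 1) y hy
    have hwN : ⁅b 1, ⁅b 1, y⁆⁆ ∈ N := hideal (b 1) _ huN
    have hw : ⁅b 1, ⁅b 1, y⁆⁆ = (4 * r2) • b 2 + (4 * r3) • b 3 := by
      rw [hu]
      simp only [lie_add, lie_smul, hge, hgf, smul_smul, smul_neg]
      module
    have hcomb : (8 * r2) • b 2 = (2 : k) • ⁅b 1, y⁆ + ⁅b 1, ⁅b 1, y⁆⁆ := by
      rw [hw, hu]; module
    have hcomb' : (8 * r3) • b 3 = ⁅b 1, ⁅b 1, y⁆⁆ - (2 : k) • ⁅b 1, y⁆ := by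
      rw [hw, hu]; module
    have m2 : r2 • b 2 ∈ N := by
      have hm : (8 * r2) • b 2 ∈ N := by
        rw [hcomb]; exact N.add_mem (N.smul_mem _ huN) hwN
      have := N.smul_mem (8 : k)⁻¹ hm
      rwa [smul_smul, ← mul_assoc, inv_mul_cancel₀ h8, one_mul] at this
    have m3 : r3 • b 3 ∈ N := by
      have hm : (8 * r3) • b 3 ∈ N := by
        rw [hcomb']; exact N.sub_mem hwN (N.smul_mem _ huN)
      have := N.smul_mem (8 : k)⁻¹ hm
      rwa [smul_smul, ← mul_assoc, inv_mul_cancel₀ h8, one_mul] at this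
    exact ⟨hr1, m2, m3⟩
  -- case split
  by_cases hc : ∃ y ∈ N, b.repr y 2 ≠ 0
  · -- then all elements have zero f-component, and N = span {b 0, b 2}
    obtain ⟨y, hy, hy2⟩ := hc
    have mb2 : b 2 ∈ N := by
      have := (key y hy).2.1
      have h := N.smul_mem (b.repr y 2)⁻¹ this
      rwa [smul_smul, inv_mul_cancel₀ hy2, one_smul] at h
    have hall3 : ∀ z ∈ N, b.repr z 3 = 0 := by
      intro z hz
      by_contra hz3
      have mb3 : b 3 ∈ N := by
        have := (key z hz).2.2
        have h := N.smul_mem (b.repr z 3)⁻¹ this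
        rwa [smul_smul, inv_mul_cancel₀ hz3, one_smul] at h
      exact hcontra mb2 mb3
    left
    refine Submodule.eq_of_le_of_finrank_le ?_ ?_
    · intro z hz
      have hz4 : z = b.repr z 0 • b 0 + b.repr z 1 • b 1 + b.repr z 2 • b 2
          + b.repr z 3 • b 3 := by
        have := b.sum_repr z
        rw [Fin.sum_univ_four] at this
        exact this.symm
      rw [hz4, (key z hz).1, hall3 z hz]
      simp only [zero_smul, add_zero, zero_add]
      exact Submodule.add_mem _
        (Submodule.smul_mem _ _ (Submodule.subset_span (by simp)))
        (Submodule.smul_mem _ _ (Submodule.subset_span (by simp)))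
    · rw [hdim, hspan 0 2 (by decide)]
  · -- all elements have zero e-component, and N = span {b 0, b 3}
    push_neg at hc
    right
    refine Submodule.eq_of_le_of_finrank_le ?_ ?_
    · intro z hz
      have hz4 : z = b.repr z 0 • b 0 + b.repr z 1 • b 1 + b.repr z 2 • b 2
          + b.repr z 3 • b 3 := by
        have := b.sum_repr z
        rw [Fin.sum_univ_four] at this
        exact this.symm
      rw [hz4, (key z hz).1, hc z hz]
      simp only [zero_smul, add_zero, zero_add]
      exact Submodule.add_mem _
        (Submodule.smul_mem _ _ (Submodule.subset_span (by simp)))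
        (Submodule.smul_mem _ _ (Submodule.subset_span (by simp)))
    · rw [hdim, hspan 0 3 (by decide)]
end

section
/- Let H₄⁽⁻⁾ be the Lie algebra over a field k of characteristic ≠ 2 with basis 1, g, e, f and brackets [1,·] = 0, [g,e] = 2e, [g,f] = −2f, [e,f] = 0. If L is a three-dimensional ideal of H₄⁽⁻⁾, then either L = span(1, e, f) or L = span(α·1 + g, e, f) for some α ∈ k. -/
/-- Any three-dimensional ideal of `H₄⁽⁻⁾` equals `span{1, e, f}` or
`span{α·1 + g, e, f}` for some `α`. -/
theorem three_dim_ideals {k : Type*} [Field k] (h2 : (2 : k) ≠ 0)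
    {L : Type*} [LieRing L] [LieAlgebra k L] (b : Module.Basis (Fin 4) k L)
    (h1g : ⁅b 0, b 1⁆ = 0) (h1e : ⁅b 0, b 2⁆ = 0) (h1f : ⁅b 0, b 3⁆ = 0)
    (hge : ⁅b 1, b 2⁆ = (2 : k) • b 2) (hgf : ⁅b 1, b 3⁆ = -((2 : k) • b 3))
    (hef : ⁅b 2, b 3⁆ = 0)
    (N : Submodule k L) (hideal : ∀ x : L, ∀ y ∈ N, ⁅x, y⁆ ∈ N)
    (hdim : Module.finrank k N = 3) :
    N = Submodule.span k ({b 0, b 2, b 3} : Set L) ∨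
      ∃ α : k, N = Submodule.span k ({α • b 0 + b 1, b 2, b 3} : Set L) := by
  have hfd : FiniteDimensional k L := Module.Finite.of_basis b
  have hL4 : Module.finrank k L = 4 := by
    rw [Module.finrank_eq_card_basis b]; simp
  have hQ : Module.finrank k (L ⧸ N) = 1 := by
    have h := Submodule.finrank_quotient_add_finrank N
    omega
  have hk1 : Module.finrank k k = 1 := Module.finrank_self k
  let ψ : (L ⧸ N) ≃ₗ[k] k := LinearEquiv.ofFinrankEq _ _ (by rw [hQ, hk1])
  set φ : L →ₗ[k] k := ψ.toLinearMap ∘ₗ N.mkQ with hφdef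
  have hker : ∀ x : L, φ x = 0 ↔ x ∈ N := by
    intro x
    rw [hφdef]
    simp [LinearMap.comp_apply, LinearEquiv.map_eq_zero_iff,
      Submodule.mkQ_apply, Submodule.Quotient.mk_eq_zero]
  have hid : ∀ x y : L, φ y = 0 → φ ⁅x, y⁆ = 0 := fun x y hy =>
    (hker _).2 (hideal x y ((hker y).1 hy))
  -- φ(e) = 0
  have hp2 : φ (b 2) = 0 := by
    by_contra hp2
    have hy1 : φ (φ (b 2) • b 1 - φ (b 1) • b 2) = 0 := by
      simp only [map_sub, map_smul, smul_eq_mul]; ring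
    have h := hid (b 1) _ hy1
    rw [lie_sub, lie_smul, lie_smul, lie_self, hge] at h
    simp only [smul_zero, zero_sub, map_neg, map_smul, smul_eq_mul, neg_eq_zero] at h
    have hp1 : φ (b 1) = 0 := by
      rcases mul_eq_zero.1 h with h' | h'
      · exact h'
      · rcases mul_eq_zero.1 h' with h'' | h''
        · exact absurd h'' h2
        · exact absurd h'' hp2
    have h' := hid (b 2) (b 1) hp1
    rw [← lie_skew, hge, map_neg, map_smul, smul_eq_mul, neg_eq_zero] at h'
    rcases mul_eq_zero.1 h' with h'' | h''
    · exact h2 h''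
    · exact hp2 h''
  -- φ(f) = 0
  have hp3 : φ (b 3) = 0 := by
    by_contra hp3
    have hy1 : φ (φ (b 3) • b 1 - φ (b 1) • b 3) = 0 := by
      simp only [map_sub, map_smul, smul_eq_mul]; ring
    have h := hid (b 1) _ hy1
    rw [lie_sub, lie_smul, lie_smul, lie_self, hgf] at h
    simp only [smul_zero, zero_sub, smul_neg, map_neg, neg_neg, map_smul, smul_eq_mul] at h
    have hp1 : φ (b 1) = 0 := by
      rcases mul_eq_zero.1 h with h' | h'
      · exact h'
      · rcases mul_eq_zero.1 h' with h'' | h''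
        · exact absurd h'' h2
        · exact absurd h'' hp3
    have h' := hid (b 3) (b 1) hp1
    rw [← lie_skew, hgf, neg_neg, map_smul, smul_eq_mul] at h'
    rcases mul_eq_zero.1 h' with h'' | h''
    · exact h2 h''
    · exact hp3 h''
  -- expansion of arbitrary x in coordinates
  have hrepr : ∀ x : L, x = b.repr x 0 • b 0 + b.repr x 1 • b 1
      + b.repr x 2 • b 2 + b.repr x 3 • b 3 := by
    intro x
    have := b.sum_repr x
    rw [Fin.sum_univ_four] at this
    linear_combination (norm := module) this.symm
  have hφx : ∀ x : L, φ x = b.repr x 0 * φ (b 0) + b.repr x 1 * φ (b 1) := by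
    intro x
    conv_lhs => rw [hrepr x]
    simp [map_add, map_smul, hp2, hp3]
  rcases eq_or_ne (φ (b 0)) 0 with hp0 | hp0
  · -- φ(1) = 0 : N = span{1, e, f}
    have hp1 : φ (b 1) ≠ 0 := by
      intro hp1
      have hN : N = ⊤ := by
        rw [eq_top_iff]
        intro x _
        rw [← hker]
        rw [hφx, hp0, hp1]; ring
      rw [hN, finrank_top, hL4] at hdim
      exact absurd hdim (by norm_num)
    left
    apply le_antisymm
    · intro x hx
      have hx0 : φ x = 0 := (hker x).2 hx
      rw [hφx, hp0] at hx0
      have hr1 : b.repr x 1 = 0 := by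
        have hm : b.repr x 1 * φ (b 1) = 0 := by linear_combination hx0
        rcases mul_eq_zero.1 hm with h' | h'
        · exact h'
        · exact absurd h' hp1
      rw [hrepr x, hr1, zero_smul, add_zero]
      refine Submodule.add_mem _ (Submodule.add_mem _ ?_ ?_) ?_ <;>
        exact Submodule.smul_mem _ _ (Submodule.subset_span (by simp))
    · rw [Submodule.span_le]
      rintro y (rfl | rfl | rfl)
      · exact (hker _).1 hp0
      · exact (hker _).1 hp2
      · exact (hker _).1 hp3
  · -- φ(1) ≠ 0 : N = span{α•1 + g, e, f} with α = -φ(g)/φ(1)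
    right
    refine ⟨-φ (b 1) / φ (b 0), ?_⟩
    apply le_antisymm
    · intro x hx
      have hx0 : φ x = 0 := (hker x).2 hx
      rw [hφx] at hx0
      have hr0 : b.repr x 0 = b.repr x 1 * (-φ (b 1) / φ (b 0)) := by
        field_simp
        linear_combination hx0
      have : x = b.repr x 1 • ((-φ (b 1) / φ (b 0)) • b 0 + b 1)
          + b.repr x 2 • b 2 + b.repr x 3 • b 3 := by
        rw [smul_add, smul_smul, ← hr0]
        exact hrepr x
      rw [this]
      refine Submodule.add_mem _ (Submodule.add_mem _ ?_ ?_) ?_ <;>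
        exact Submodule.smul_mem _ _ (Submodule.subset_span (by simp))
    · rw [Submodule.span_le]
      rintro y (rfl | rfl | rfl)
      · refine (hker _).1 ?_
        rw [map_add, map_smul, smul_eq_mul]
        field_simp
        ring
      · exact (hker _).1 hp2
      · exact (hker _).1 hp3
end

section
/- Let H₄⁽⁻⁾ be the Lie algebra over a field k of characteristic ≠ 2 with basis 1, g, e, f and brackets [1,·] = 0, [g,e] = 2e, [g,f] = −2f, [e,f] = 0. Every three-dimensional non-abelian Lie subalgebra of H₄⁽⁻⁾ has one of the forms span(α·1 + g, e, f), span(1, g + γe, f), or span(1, g + γf, e) for some α, γ ∈ k. -/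
/-- Every three-dimensional non-abelian Lie subalgebra of `H₄⁽⁻⁾` has one of the forms
`span{α·1 + g, e, f}`, `span{1, g + γe, f}`, or `span{1, g + γf, e}`. -/
theorem three_dim_nonabelian_subalgebras {k : Type*} [Field k] (h2 : (2 : k) ≠ 0)
    {L : Type*} [LieRing L] [LieAlgebra k L] (b : Module.Basis (Fin 4) k L)
    (h1g : ⁅b 0, b 1⁆ = 0) (h1e : ⁅b 0, b 2⁆ = 0) (h1f : ⁅b 0, b 3⁆ = 0)
    (hge : ⁅b 1, b 2⁆ = (2 : k) • b 2) (hgf : ⁅b 1, b 3⁆ = -((2 : k) • b 3))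
    (hef : ⁅b 2, b 3⁆ = 0)
    (N : Submodule k L) (hsub : ∀ x ∈ N, ∀ y ∈ N, ⁅x, y⁆ ∈ N)
    (hdim : Module.finrank k N = 3)
    (hnonab : ∃ x ∈ N, ∃ y ∈ N, ⁅x, y⁆ ≠ 0) :
    (∃ α : k, N = Submodule.span k ({α • b 0 + b 1, b 2, b 3} : Set L)) ∨
    (∃ γ : k, N = Submodule.span k ({b 0, b 1 + γ • b 2, b 3} : Set L)) ∨
    (∃ γ : k, N = Submodule.span k ({b 0, b 1 + γ • b 3, b 2} : Set L)) := by
  haveI := Module.Finite.of_basis b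
  have hL : Module.finrank k L = 4 := by
    rw [Module.finrank_eq_card_basis b]; simp
  have hNlt : N < ⊤ := by
    rw [lt_top_iff_ne_top]
    intro h
    rw [h, finrank_top, hL] at hdim
    omega
  obtain ⟨φ, hφ0, hφmap⟩ := N.exists_dual_map_eq_bot_of_lt_top hNlt inferInstance
  have hNle : N ≤ LinearMap.ker φ := by
    intro x hx
    have : φ x ∈ N.map φ := Submodule.mem_map_of_mem hx
    rw [hφmap] at this
    simpa using this
  have hker : Module.finrank k (LinearMap.ker φ) = 3 := by
    have h := LinearMap.finrank_range_add_finrank_ker φ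
    have hr : LinearMap.range φ = ⊤ := by
      obtain ⟨x, hx⟩ : ∃ x, φ x ≠ 0 := by
        by_contra h; push_neg at h; exact hφ0 (by ext x; simp [h])
      rw [eq_top_iff]
      intro y _
      exact ⟨(y / φ x) • x, by rw [map_smul, smul_eq_mul]; field_simp⟩
    rw [hr, finrank_top, hL, Module.finrank_self] at h
    omega
  have hN : N = LinearMap.ker φ := Submodule.eq_of_le_of_finrank_eq hNle (by rw [hdim, hker])
  have memN : ∀ x : L, x ∈ N ↔ φ x = 0 := by
    intro x; rw [hN]; exact LinearMap.mem_ker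
  set a := φ (b 0) with ha_def
  set B := φ (b 1) with hB_def
  set c := φ (b 2) with hc_def
  set d := φ (b 3) with hd_def
  have habcd : a ≠ 0 ∨ B ≠ 0 ∨ c ≠ 0 ∨ d ≠ 0 := by
    by_contra h
    push_neg at h
    obtain ⟨ha, hb, hc, hd⟩ := h
    apply hφ0
    apply b.ext
    intro i
    fin_cases i <;>
      simp only [LinearMap.zero_apply, Fin.isValue, ← ha_def, ← hB_def, ← hc_def, ← hd_def] <;>
      assumption
  have phiev : ∀ x : L, φ x = b.repr x 0 * a + b.repr x 1 * B + b.repr x 2 * c + b.repr x 3 * d := by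
    intro x
    conv_lhs => rw [← b.sum_repr x]
    rw [map_sum, Fin.sum_univ_four]
    simp [smul_eq_mul]
    rfl
  have hg1 : ⁅b 1, b 0⁆ = (0 : L) := by rw [← lie_skew, h1g, neg_zero]
  have he1 : ⁅b 2, b 0⁆ = (0 : L) := by rw [← lie_skew, h1e, neg_zero]
  have hf1 : ⁅b 3, b 0⁆ = (0 : L) := by rw [← lie_skew, h1f, neg_zero]
  have heg : ⁅b 2, b 1⁆ = -((2 : k) • b 2) := by rw [← lie_skew, hge]
  have hfg : ⁅b 3, b 1⁆ = (2 : k) • b 3 := by rw [← lie_skew, hgf, neg_neg]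
  have hfe : ⁅b 3, b 2⁆ = (0 : L) := by rw [← lie_skew, hef, neg_zero]
  have brak : ∀ x y : L, ⁅x, y⁆ =
      ((2 : k) * (b.repr x 1 * b.repr y 2 - b.repr x 2 * b.repr y 1)) • b 2
      + (-((2 : k) * (b.repr x 1 * b.repr y 3 - b.repr x 3 * b.repr y 1))) • b 3 := by
    intro x y
    conv_lhs => rw [← b.sum_repr x, ← b.sum_repr y]
    simp only [Fin.sum_univ_four, add_lie, lie_add, smul_lie, lie_smul, lie_self,
      h1g, h1e, h1f, hge, hgf, hef, hg1, he1, hf1, heg, hfg, hfe,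
      smul_zero, zero_add, add_zero, smul_neg, smul_smul]
    module
  by_cases hc : c = 0
  · by_cases hd : d = 0
    · -- Case c = d = 0 : first family
      left
      have ha : a ≠ 0 := by
        intro ha0
        have hB : B ≠ 0 := by
          rcases habcd with h | h | h | h
          · exact absurd ha0 h
          · exact h
          · exact absurd hc h
          · exact absurd hd h
        obtain ⟨x, hx, y, hy, hne⟩ := hnonab
        have key : ∀ z ∈ N, b.repr z 1 = 0 := by
          intro z hz
          have hpz := (memN z).1 hz
          rw [phiev z, ha0, hc, hd] at hpz
          simp only [mul_zero, add_zero, zero_add] at hpz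
          exact (mul_eq_zero.1 hpz).resolve_right hB
        apply hne
        rw [brak x y, key x hx, key y hy]
        simp
      refine ⟨-(B * a⁻¹), ?_⟩
      apply le_antisymm
      · intro x hx
        have hpx := (memN x).1 hx
        rw [phiev x, hc, hd] at hpx
        simp only [mul_zero, add_zero] at hpx
        have hr0 : b.repr x 0 = -(B * a⁻¹) * b.repr x 1 := by
          field_simp
          linear_combination hpx
        have hxeq : x = b.repr x 1 • ((-(B * a⁻¹)) • b 0 + b 1)
            + b.repr x 2 • b 2 + b.repr x 3 • b 3 := by
          conv_lhs => rw [← b.sum_repr x]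
          rw [Fin.sum_univ_four, hr0]
          module
        rw [hxeq]
        have m1 : (-(B * a⁻¹)) • b 0 + b 1 ∈
            Submodule.span k ({(-(B * a⁻¹)) • b 0 + b 1, b 2, b 3} : Set L) :=
          Submodule.subset_span (by simp)
        have m2 : b 2 ∈ Submodule.span k ({(-(B * a⁻¹)) • b 0 + b 1, b 2, b 3} : Set L) :=
          Submodule.subset_span (by simp)
        have m3 : b 3 ∈ Submodule.span k ({(-(B * a⁻¹)) • b 0 + b 1, b 2, b 3} : Set L) :=
          Submodule.subset_span (by simp)
        exact Submodule.add_mem _ (Submodule.add_mem _ (Submodule.smul_mem _ _ m1)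
          (Submodule.smul_mem _ _ m2)) (Submodule.smul_mem _ _ m3)
      · rw [Submodule.span_le]
        intro z hz
        simp only [Set.mem_insert_iff, Set.mem_singleton_iff] at hz
        rcases hz with rfl | rfl | rfl
        · rw [SetLike.mem_coe, memN, map_add, map_smul, ← ha_def, ← hB_def, smul_eq_mul]
          field_simp
          ring
        · rw [SetLike.mem_coe, memN, ← hc_def]; exact hc
        · rw [SetLike.mem_coe, memN, ← hd_def]; exact hd
    · -- Case c = 0, d ≠ 0 : third family
      right; right
      have ha : a = 0 := by
        have hx : b 1 - (B * d⁻¹) • b 3 ∈ N := by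
          rw [memN, map_sub, map_smul, ← hB_def, ← hd_def, smul_eq_mul]
          field_simp
          ring
        have hy : b 0 - (a * d⁻¹) • b 3 ∈ N := by
          rw [memN, map_sub, map_smul, ← ha_def, ← hd_def, smul_eq_mul]
          field_simp
          ring
        have hbr := hsub _ hx _ hy
        have heq : ⁅b 1 - (B * d⁻¹) • b 3, b 0 - (a * d⁻¹) • b 3⁆
            = (a * d⁻¹ * 2) • b 3 := by
          simp only [lie_sub, sub_lie, lie_smul, smul_lie, hg1, hgf, hf1, lie_self,
            smul_zero, smul_smul, smul_neg]
          module
        rw [heq, memN, map_smul, ← hd_def, smul_eq_mul] at hbr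
        have hrw : a * d⁻¹ * 2 * d = a * 2 := by
          field_simp
        rw [hrw] at hbr
        exact (mul_eq_zero.1 hbr).resolve_right h2
      refine ⟨-(B * d⁻¹), ?_⟩
      apply le_antisymm
      · intro x hx
        have hpx := (memN x).1 hx
        rw [phiev x, ha, hc] at hpx
        simp only [mul_zero, add_zero, zero_add] at hpx
        have hr3 : b.repr x 3 = -(B * d⁻¹) * b.repr x 1 := by
          field_simp
          linear_combination hpx
        have hxeq : x = b.repr x 0 • b 0 + b.repr x 1 • (b 1 + (-(B * d⁻¹)) • b 3)
            + b.repr x 2 • b 2 := by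
          conv_lhs => rw [← b.sum_repr x]
          rw [Fin.sum_univ_four, hr3]
          module
        rw [hxeq]
        have m1 : b 0 ∈ Submodule.span k ({b 0, b 1 + (-(B * d⁻¹)) • b 3, b 2} : Set L) :=
          Submodule.subset_span (by simp)
        have m2 : b 1 + (-(B * d⁻¹)) • b 3 ∈
            Submodule.span k ({b 0, b 1 + (-(B * d⁻¹)) • b 3, b 2} : Set L) :=
          Submodule.subset_span (by simp)
        have m3 : b 2 ∈ Submodule.span k ({b 0, b 1 + (-(B * d⁻¹)) • b 3, b 2} : Set L) :=
          Submodule.subset_span (by simp)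
        exact Submodule.add_mem _ (Submodule.add_mem _ (Submodule.smul_mem _ _ m1)
          (Submodule.smul_mem _ _ m2)) (Submodule.smul_mem _ _ m3)
      · rw [Submodule.span_le]
        intro z hz
        simp only [Set.mem_insert_iff, Set.mem_singleton_iff] at hz
        rcases hz with rfl | rfl | rfl
        · rw [SetLike.mem_coe, memN, ← ha_def]; exact ha
        · rw [SetLike.mem_coe, memN, map_add, map_smul, ← hB_def, ← hd_def, smul_eq_mul]
          field_simp
          ring
        · rw [SetLike.mem_coe, memN, ← hc_def]; exact hc
  · by_cases hd : d = 0
    · -- Case c ≠ 0, d = 0 : second family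
      right; left
      have ha : a = 0 := by
        have hx : b 1 - (B * c⁻¹) • b 2 ∈ N := by
          rw [memN, map_sub, map_smul, ← hB_def, ← hc_def, smul_eq_mul]
          field_simp
          ring
        have hy : b 0 - (a * c⁻¹) • b 2 ∈ N := by
          rw [memN, map_sub, map_smul, ← ha_def, ← hc_def, smul_eq_mul]
          field_simp
          ring
        have hbr := hsub _ hx _ hy
        have heq : ⁅b 1 - (B * c⁻¹) • b 2, b 0 - (a * c⁻¹) • b 2⁆
            = (-(a * c⁻¹ * 2)) • b 2 := by
          simp only [lie_sub, sub_lie, lie_smul, smul_lie, hg1, hge, he1, lie_self,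
            smul_zero, smul_smul, smul_neg]
          module
        rw [heq, memN, map_smul, ← hc_def, smul_eq_mul] at hbr
        have hrw : -(a * c⁻¹ * 2) * c = -(a * 2) := by
          field_simp
        rw [hrw, neg_eq_zero] at hbr
        exact (mul_eq_zero.1 hbr).resolve_right h2
      refine ⟨-(B * c⁻¹), ?_⟩
      apply le_antisymm
      · intro x hx
        have hpx := (memN x).1 hx
        rw [phiev x, ha, hd] at hpx
        simp only [mul_zero, add_zero, zero_add] at hpx
        have hr2 : b.repr x 2 = -(B * c⁻¹) * b.repr x 1 := by
          field_simp
          linear_combination hpx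
        have hxeq : x = b.repr x 0 • b 0 + b.repr x 1 • (b 1 + (-(B * c⁻¹)) • b 2)
            + b.repr x 3 • b 3 := by
          conv_lhs => rw [← b.sum_repr x]
          rw [Fin.sum_univ_four, hr2]
          module
        rw [hxeq]
        have m1 : b 0 ∈ Submodule.span k ({b 0, b 1 + (-(B * c⁻¹)) • b 2, b 3} : Set L) :=
          Submodule.subset_span (by simp)
        have m2 : b 1 + (-(B * c⁻¹)) • b 2 ∈
            Submodule.span k ({b 0, b 1 + (-(B * c⁻¹)) • b 2, b 3} : Set L) :=
          Submodule.subset_span (by simp)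
        have m3 : b 3 ∈ Submodule.span k ({b 0, b 1 + (-(B * c⁻¹)) • b 2, b 3} : Set L) :=
          Submodule.subset_span (by simp)
        exact Submodule.add_mem _ (Submodule.add_mem _ (Submodule.smul_mem _ _ m1)
          (Submodule.smul_mem _ _ m2)) (Submodule.smul_mem _ _ m3)
      · rw [Submodule.span_le]
        intro z hz
        simp only [Set.mem_insert_iff, Set.mem_singleton_iff] at hz
        rcases hz with rfl | rfl | rfl
        · rw [SetLike.mem_coe, memN, ← ha_def]; exact ha
        · rw [SetLike.mem_coe, memN, map_add, map_smul, ← hB_def, ← hc_def, smul_eq_mul]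
          field_simp
          ring
        · rw [SetLike.mem_coe, memN, ← hd_def]; exact hd
    · -- Case c ≠ 0, d ≠ 0 : impossible
      exfalso
      have hx : b 1 - (B * d⁻¹) • b 3 ∈ N := by
        rw [memN, map_sub, map_smul, ← hB_def, ← hd_def, smul_eq_mul]
        field_simp
        ring
      have hy : d • b 2 - c • b 3 ∈ N := by
        rw [memN, map_sub, map_smul, map_smul, ← hc_def, ← hd_def, smul_eq_mul, smul_eq_mul]
        ring
      have hbr := hsub _ hx _ hy
      have heq : ⁅b 1 - (B * d⁻¹) • b 3, d • b 2 - c • b 3⁆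
          = (d * 2) • b 2 + (c * 2) • b 3 := by
        simp only [lie_sub, sub_lie, lie_smul, smul_lie, hge, hgf, hfe, lie_self,
          smul_zero, smul_smul, smul_neg]
        module
      rw [heq, memN, map_add, map_smul, map_smul, ← hc_def, ← hd_def,
        smul_eq_mul, smul_eq_mul] at hbr
      have h4 : (2 : k) * (2 * (c * d)) = 0 := by linear_combination hbr
      rcases mul_eq_zero.1 h4 with h | h
      · exact h2 h
      rcases mul_eq_zero.1 h with h | h
      · exact h2 h
      rcases mul_eq_zero.1 h with h | h
      · exact hc h
      · exact hd h
end

section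
/- Let L be the three-dimensional Lie algebra with basis h, e, f and brackets [h,e] = 2e, [h,f] = −2f, [e,f] = 0, over a field k, and λ ∈ k. The linear operator R defined by R(h) = α₁h + β₁e + γ₁f, R(e) = −λe, R(f) = −λf (for any α₁, β₁, γ₁ ∈ k) is a Rota–Baxter operator of weight λ on L, i.e., [R(a), R(b)] = R([R(a), b] + [a, R(b)] + λ[a, b]) for all a, b ∈ L. -/
/-- Case 1.8: `R(h) = α₁h + β₁e + γ₁f`, `R(e) = -λe`, `R(f) = -λf` is a Rota–Baxter
operator of weight `lam` on the Lie algebra with basis `h, e, f`, `[h,e] = 2e`,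
`[h,f] = -2f`, `[e,f] = 0`. -/
theorem RB_case_1_8 {k : Type*} [Field k]
    {L : Type*} [LieRing L] [LieAlgebra k L] (b : Module.Basis (Fin 3) k L)
    (hhe : ⁅b 0, b 1⁆ = (2 : k) • b 1) (hhf : ⁅b 0, b 2⁆ = -((2 : k) • b 2))
    (hef : ⁅b 1, b 2⁆ = 0)
    (lam α₁ β₁ γ₁ : k) (R : L →ₗ[k] L)
    (hRh : R (b 0) = α₁ • b 0 + β₁ • b 1 + γ₁ • b 2)
    (hRe : R (b 1) = -(lam • b 1)) (hRf : R (b 2) = -(lam • b 2)) :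
    ∀ a c : L, ⁅R a, R c⁆ = R (⁅R a, c⁆ + ⁅a, R c⁆ + lam • ⁅a, c⁆) := by
  have heh : ⁅b 1, b 0⁆ = -((2 : k) • b 1) := by rw [← lie_skew, hhe]
  have hfh : ⁅b 2, b 0⁆ = (2 : k) • b 2 := by rw [← lie_skew, hhf]; simp
  have hfe : ⁅b 2, b 1⁆ = 0 := by rw [← lie_skew, hef]; simp
  set B : L →ₗ[k] L →ₗ[k] L := LinearMap.mk₂ k (fun x y => ⁅x, y⁆) add_lie smul_lie lie_add lie_smul with hB
  have hBapp : ∀ x y : L, B x y = ⁅x, y⁆ := fun x y => rfl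
  set LHS : L →ₗ[k] L →ₗ[k] L := B.compl₁₂ R R with hL
  set RHS : L →ₗ[k] L →ₗ[k] L :=
    (B.compl₁₂ R LinearMap.id + B.compl₁₂ LinearMap.id R + lam • B).compr₂ R with hR'
  have key : LHS = RHS := by
    refine b.ext fun i => b.ext fun j => ?_
    fin_cases i <;> fin_cases j <;>
      simp [hL, hR', LinearMap.compl₁₂_apply, LinearMap.compr₂_apply, hBapp,
        hRh, hRe, hRf, hhe, hhf, hef, heh, hfh, hfe, lie_smul, smul_lie, lie_add, add_lie,
        smul_smul, map_add, map_smul, smul_add, mul_comm] <;>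
      (ring_nf; try module)
  intro a c
  have := LinearMap.congr_fun (LinearMap.congr_fun key a) c
  simpa [hL, hR', LinearMap.compl₁₂_apply, LinearMap.compr₂_apply, hBapp] using this
end

section
/- Let L be the three-dimensional Lie algebra with basis h, e, f and brackets [h,e] = 2e, [h,f] = −2f, [e,f] = 0, over a field k with char k ≠ 2, λ ∈ k. For any β₁, γ₁, β₃ ∈ k with β₃ ≠ 0, the linear operator R defined by R(h) = −(λ/2)h + β₁e + γ₁f, R(e) = −λe, R(f) = β₃e − λf is a Rota–Baxter operator of weight λ on L. -/
/-- Case 1.9: `R(h) = -(λ/2)h + β₁e + γ₁f`, `R(e) = -λe`, `R(f) = β₃e - λf` with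
`β₃ ≠ 0` is a Rota–Baxter operator of weight `lam`. -/
theorem RB_case_1_9 {k : Type*} [Field k] (h2 : (2 : k) ≠ 0)
    {L : Type*} [LieRing L] [LieAlgebra k L] (b : Module.Basis (Fin 3) k L)
    (hhe : ⁅b 0, b 1⁆ = (2 : k) • b 1) (hhf : ⁅b 0, b 2⁆ = -((2 : k) • b 2))
    (hef : ⁅b 1, b 2⁆ = 0)
    (lam β₁ γ₁ β₃ : k) (hβ₃ : β₃ ≠ 0) (R : L →ₗ[k] L)
    (hRh : R (b 0) = -((lam / 2) • b 0) + β₁ • b 1 + γ₁ • b 2)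
    (hRe : R (b 1) = -(lam • b 1))
    (hRf : R (b 2) = β₃ • b 1 - lam • b 2) :
    ∀ a c : L, ⁅R a, R c⁆ = R (⁅R a, c⁆ + ⁅a, R c⁆ + lam • ⁅a, c⁆) := by
  obtain ⟨μ, hμ⟩ : ∃ μ, lam = 2 * μ := ⟨lam / 2, by field_simp⟩
  subst hμ
  rw [mul_div_cancel_left₀ _ h2] at hRh
  have heh : ⁅b 1, b 0⁆ = -((2 : k) • b 1) := by rw [← lie_skew, hhe]
  have hfh : ⁅b 2, b 0⁆ = (2 : k) • b 2 := by rw [← lie_skew, hhf, neg_neg]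
  have hfe : ⁅b 2, b 1⁆ = 0 := by rw [← lie_skew, hef, neg_zero]
  let F : L →ₗ[k] L →ₗ[k] L := LinearMap.mk₂ k (fun a c => ⁅R a, R c⁆)
    (fun a a' c => by simp [add_lie]) (fun t a c => by simp [smul_lie])
    (fun a c c' => by simp [lie_add]) (fun t a c => by simp [lie_smul])
  let G : L →ₗ[k] L →ₗ[k] L :=
    LinearMap.mk₂ k (fun a c => R (⁅R a, c⁆ + ⁅a, R c⁆ + (2 * μ) • ⁅a, c⁆))
    (fun a a' c => by simp [add_lie, smul_add]; try abel)
    (fun t a c => by simp [smul_lie, smul_add, smul_comm t]; try abel)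
    (fun a c c' => by simp [lie_add, smul_add]; try abel)
    (fun t a c => by simp [lie_smul, smul_add, smul_comm t]; try abel)
  suffices hFG : F = G by
    intro a c
    exact LinearMap.congr_fun (LinearMap.congr_fun hFG a) c
  apply b.ext; intro i; apply b.ext; intro j
  have hi : i = 0 ∨ i = 1 ∨ i = 2 := by omega
  have hj : j = 0 ∨ j = 1 ∨ j = 2 := by omega
  rcases hi with rfl | rfl | rfl <;> rcases hj with rfl | rfl | rfl <;>
    simp only [F, G, LinearMap.mk₂_apply, Fin.isValue, hRh, hRe, hRf,
      lie_add, add_lie, lie_sub, sub_lie, lie_smul, smul_lie, lie_neg, neg_lie,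
      hhe, hhf, hef, heh, hfh, hfe, lie_self, map_add, map_sub, map_neg, map_smul,
      map_zero, smul_zero, neg_zero, smul_neg, smul_add, smul_sub, smul_smul] <;>
    module
end

section
/- Let L be the three-dimensional Lie algebra with basis h, y, z over a field k, with brackets [h,y] = 2y, [h,z] = 0, [y,z] = 0, and λ ∈ k. For any α₁ ≠ 0 and β₁, γ₁, γ₃ ∈ k, the linear map R defined by R(h) = α₁h + β₁y + γ₁z, R(y) = −λy, R(z) = γ₃z is a Rota–Baxter operator of weight λ on L. -/
/-- Case 2.4: on the Lie algebra with basis `h, y, z`, `[h,y] = 2y`,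
`[h,z] = [y,z] = 0`, the operator `R(h) = α₁h + β₁y + γ₁z`, `R(y) = -λy`,
`R(z) = γ₃z` with `α₁ ≠ 0` is a Rota–Baxter operator of weight `lam`. -/
theorem RB_case_2_4 {k : Type*} [Field k]
    {L : Type*} [LieRing L] [LieAlgebra k L] (b : Module.Basis (Fin 3) k L)
    (hhy : ⁅b 0, b 1⁆ = (2 : k) • b 1) (hhz : ⁅b 0, b 2⁆ = 0)
    (hyz : ⁅b 1, b 2⁆ = 0)
    (lam α₁ β₁ γ₁ γ₃ : k) (hα₁ : α₁ ≠ 0) (R : L →ₗ[k] L)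
    (hRh : R (b 0) = α₁ • b 0 + β₁ • b 1 + γ₁ • b 2)
    (hRy : R (b 1) = -(lam • b 1)) (hRz : R (b 2) = γ₃ • b 2) :
    ∀ a c : L, ⁅R a, R c⁆ = R (⁅R a, c⁆ + ⁅a, R c⁆ + lam • ⁅a, c⁆) := by
  have hyh : ⁅b 1, b 0⁆ = -((2 : k) • b 1) := by rw [← lie_skew, hhy]
  have hzh : ⁅b 2, b 0⁆ = 0 := by rw [← lie_skew, hhz, neg_zero]
  have hzy : ⁅b 2, b 1⁆ = 0 := by rw [← lie_skew, hyz, neg_zero]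
  intro a c
  rw [← b.sum_repr a, ← b.sum_repr c]
  simp only [Fin.sum_univ_three]
  simp only [map_add, map_smul, lie_add, add_lie, lie_smul, smul_lie, map_neg,
    hRh, hRy, hRz, hhy, hhz, hyz, hyh, hzh, hzy, lie_self, lie_neg, neg_lie,
    smul_neg, neg_neg, smul_zero, smul_add, add_zero, zero_add, lie_zero,
    zero_lie, map_zero, neg_zero]
  module
end

section
/- Let H₄⁽⁻⁾ be the 4-dimensional Lie algebra over a field k (char k ≠ 2) with basis 1, g, e, f, brackets [1,·] = 0, [g,e] = 2e, [g,f] = −2f, [e,f] = 0, and let λ ∈ k. The linear operator R defined by R(1) = 0, R(g) = 0, R(e) = α·1 − λe, R(f) = α₁·1 − λf (for any α, α₁ ∈ k) is a Rota–Baxter operator of weight λ on H₄⁽⁻⁾. -/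
/-- On `H₄⁽⁻⁾`, the operator `R(1) = 0`, `R(g) = 0`, `R(e) = α·1 - λe`,
`R(f) = α₁·1 - λf` is a Rota–Baxter operator of weight `lam`. -/
theorem RB_on_H4 {k : Type*} [Field k] (h2 : (2 : k) ≠ 0)
    {L : Type*} [LieRing L] [LieAlgebra k L] (b : Module.Basis (Fin 4) k L)
    (h1g : ⁅b 0, b 1⁆ = 0) (h1e : ⁅b 0, b 2⁆ = 0) (h1f : ⁅b 0, b 3⁆ = 0)
    (hge : ⁅b 1, b 2⁆ = (2 : k) • b 2) (hgf : ⁅b 1, b 3⁆ = -((2 : k) • b 3))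
    (hef : ⁅b 2, b 3⁆ = 0)
    (lam α α₁ : k) (R : L →ₗ[k] L)
    (hR1 : R (b 0) = 0) (hRg : R (b 1) = 0)
    (hRe : R (b 2) = α • b 0 - lam • b 2)
    (hRf : R (b 3) = α₁ • b 0 - lam • b 3) :
    ∀ a c : L, ⁅R a, R c⁆ = R (⁅R a, c⁆ + ⁅a, R c⁆ + lam • ⁅a, c⁆) := by
  have hg1 : ⁅b 1, b 0⁆ = 0 := by rw [← lie_skew, h1g, neg_zero]
  have he1 : ⁅b 2, b 0⁆ = 0 := by rw [← lie_skew, h1e, neg_zero]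
  have hf1 : ⁅b 3, b 0⁆ = 0 := by rw [← lie_skew, h1f, neg_zero]
  have heg : ⁅b 2, b 1⁆ = -((2 : k) • b 2) := by rw [← lie_skew, hge]
  have hfg : ⁅b 3, b 1⁆ = (2 : k) • b 3 := by rw [← lie_skew, hgf, neg_neg]
  have hfe : ⁅b 3, b 2⁆ = 0 := by rw [← lie_skew, hef, neg_zero]
  let ad : L →ₗ[k] L →ₗ[k] L := (LieAlgebra.ad k L : L →ₗ[k] Module.End k L)
  have key : (ad.comp R).compl₂ R =
      (((ad.comp R) + ad.compl₂ R + lam • ad).compr₂ R) := by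
    apply b.ext; intro i
    apply b.ext; intro j
    fin_cases i <;> fin_cases j <;>
      simp [ad, hR1, hRg, hRe, hRf, h1g, h1e, h1f, hge, hgf, hef,
        hg1, he1, hf1, heg, hfg, hfe, lie_smul, smul_lie, smul_sub, smul_smul,
        mul_comm] <;>
      module
  intro a c
  simpa [ad, map_add, map_smul] using
    LinearMap.congr_fun (LinearMap.congr_fun key a) c
end
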